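/- For every integer j ≥ 1, Σ_{m=1}^{j} C(j, m) · (−1)^{j−m} / m³ = (−1)^{j−1} · (H_j³ + 3·H_j·H_j^{(2)} + 2·H_j^{(3)}) / 6; equivalently, S(3, j) = (−1)^{j−1} · (H_j³ + 3·H_j·H_j^{(2)} + 2·H_j^{(3)}) / (6 · j!). -/

import Mathlib

/-- The generalized transformation coefficient
`S k j = (1/j!) · Σ_{m=1}^{j} C(j,m) · (−1)^{j−m} · m^{−k}`. -/
noncomputable def S (k j : ℕ) : ℝ :=
  (1 / (Nat.factorial j : ℝ)) *
    ∑ m ∈ Finset.Icc 1 j, (Nat.choose j m : ℝ) * (-1 : ℝ) ^ (j - m) / (m : ℝ) ^ k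

/-- The `r`-order harmonic number `H r n = Σ_{m=1}^{n} 1/m^r`. -/
noncomputable def H (r n : ℕ) : ℝ :=
  ∑ m ∈ Finset.Icc 1 n, 1 / (m : ℝ) ^ r

noncomputable def T (k j : ℕ) : ℝ :=
  ∑ m ∈ Finset.Icc 1 j, (Nat.choose j m : ℝ) * (-1 : ℝ) ^ (m - 1) / (m : ℝ) ^ k

lemma Icc_sum_eq (f : ℕ → ℝ) (j : ℕ) :
    ∑ m ∈ Finset.Icc 1 j, f m = ∑ i ∈ Finset.range j, f (1 + i) := by
  rw [← Finset.Ico_add_one_right_eq_Icc, Finset.sum_Ico_eq_sum_range]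
  simp

lemma T_zero (j : ℕ) (hj : 1 ≤ j) : T 0 j = 1 := by
  have h0 : (∑ i ∈ Finset.range (j + 1), (-1 : ℝ) ^ i * (Nat.choose j i : ℝ)) = 0 := by
    have := Int.alternating_sum_range_choose_of_ne (Nat.one_le_iff_ne_zero.mp hj)
    exact_mod_cast congrArg (fun z : ℤ => (z : ℝ)) this
  rw [Finset.sum_range_succ'] at h0
  simp only [pow_zero, Nat.choose_zero_right, Nat.cast_one, one_mul] at h0
  unfold T
  rw [Icc_sum_eq]
  have : ∀ i ∈ Finset.range j,
      (Nat.choose j (1 + i) : ℝ) * (-1 : ℝ) ^ (1 + i - 1) / ((1 + i : ℕ) : ℝ) ^ 0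
        = -((-1 : ℝ) ^ (i + 1) * (Nat.choose j (i + 1) : ℝ)) := by
    intro i _
    simp only [pow_zero, div_one, Nat.add_sub_cancel_left]
    rw [Nat.add_comm 1 i]
    ring
  rw [Finset.sum_congr rfl this, Finset.sum_neg_distrib]
  linarith

lemma T_rec (k j : ℕ) :
    T (k + 1) (j + 1) = T (k + 1) j + T k (j + 1) / (j + 1) := by
  have hTj : T (k + 1) j
      = ∑ m ∈ Finset.Icc 1 (j + 1), (Nat.choose j m : ℝ) * (-1 : ℝ) ^ (m - 1) / (m : ℝ) ^ (k + 1) := by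
    rw [Finset.sum_Icc_succ_top (by omega : 1 ≤ j + 1)]
    simp [T, Nat.choose_succ_self]
  have key : T (k + 1) (j + 1) - T (k + 1) j
      = ∑ m ∈ Finset.Icc 1 (j + 1),
          (Nat.choose j (m - 1) : ℝ) * (-1 : ℝ) ^ (m - 1) / (m : ℝ) ^ (k + 1) := by
    rw [hTj]
    unfold T
    rw [← Finset.sum_sub_distrib]
    refine Finset.sum_congr rfl fun m hm => ?_
    obtain ⟨hm1, hm2⟩ := Finset.mem_Icc.mp hm
    obtain ⟨n, rfl⟩ := Nat.exists_eq_add_of_le hm1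
    have hc : (Nat.choose (j + 1) (1 + n) : ℝ)
        = (Nat.choose j n : ℝ) + (Nat.choose j (1 + n) : ℝ) := by
      rw [Nat.add_comm 1 n]
      exact_mod_cast congrArg (fun x : ℕ => (x : ℝ)) (Nat.choose_succ_succ j n)
    rw [hc]
    have : (1 + n) - 1 = n := by omega
    rw [this]
    ring
  have key2 : ∑ m ∈ Finset.Icc 1 (j + 1),
          (Nat.choose j (m - 1) : ℝ) * (-1 : ℝ) ^ (m - 1) / (m : ℝ) ^ (k + 1)
      = T k (j + 1) / (j + 1) := by
    unfold T
    rw [Finset.sum_div]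
    refine Finset.sum_congr rfl fun m hm => ?_
    obtain ⟨hm1, hm2⟩ := Finset.mem_Icc.mp hm
    obtain ⟨n, rfl⟩ := Nat.exists_eq_add_of_le hm1
    simp only [Nat.add_sub_cancel_left]
    have hid : ((j : ℝ) + 1) * (Nat.choose j n : ℝ)
        = (Nat.choose (j + 1) (1 + n) : ℝ) * ((1 + n : ℕ) : ℝ) := by
      rw [Nat.add_comm 1 n]
      exact_mod_cast Nat.add_one_mul_choose_eq j n
    have hn : ((1 + n : ℕ) : ℝ) ≠ 0 := by positivity
    have hj0 : (j : ℝ) + 1 ≠ 0 := by positivity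
    push_cast at hid ⊢
    field_simp
    linear_combination (((1 : ℝ) + n) ^ k) * hid
  linarith

lemma H_succ (r j : ℕ) : H r (j + 1) = H r j + 1 / ((j : ℝ) + 1) ^ r := by
  unfold H
  rw [Finset.sum_Icc_succ_top (by omega : 1 ≤ j + 1)]
  push_cast
  ring

lemma T_one (j : ℕ) : T 1 j = H 1 j := by
  induction j with
  | zero => simp [T, H]
  | succ n ih =>
    rw [T_rec 0 n, T_zero (n + 1) (by omega), ih, H_succ]
    ring

lemma T_two (j : ℕ) : T 2 j = ((H 1 j) ^ 2 + H 2 j) / 2 := by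
  induction j with
  | zero => simp [T, H]
  | succ n ih =>
    rw [T_rec 1 n, T_one, ih, H_succ, H_succ]
    have h : ((n : ℝ) + 1) ≠ 0 := by positivity
    field_simp
    ring

lemma T_three (j : ℕ) : T 3 j = ((H 1 j) ^ 3 + 3 * H 1 j * H 2 j + 2 * H 3 j) / 6 := by
  induction j with
  | zero => simp [T, H]
  | succ n ih =>
    rw [T_rec 2 n, T_two, ih, H_succ, H_succ, H_succ]
    have h : ((n : ℝ) + 1) ≠ 0 := by positivity
    field_simp
    ring

theorem stmt_4 (j : ℕ) (hj : 1 ≤ j) :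
    (∑ m ∈ Finset.Icc 1 j, (Nat.choose j m : ℝ) * (-1 : ℝ) ^ (j - m) / (m : ℝ) ^ 3)
      = (-1 : ℝ) ^ (j - 1) * ((H 1 j) ^ 3 + 3 * H 1 j * H 2 j + 2 * H 3 j) / 6 ∧
    S 3 j = (-1 : ℝ) ^ (j - 1) * ((H 1 j) ^ 3 + 3 * H 1 j * H 2 j + 2 * H 3 j)
      / (6 * (Nat.factorial j : ℝ)) := by
  have hmain : (∑ m ∈ Finset.Icc 1 j, (Nat.choose j m : ℝ) * (-1 : ℝ) ^ (j - m) / (m : ℝ) ^ 3)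
      = (-1 : ℝ) ^ (j - 1) * ((H 1 j) ^ 3 + 3 * H 1 j * H 2 j + 2 * H 3 j) / 6 := by
    have hsum : (∑ m ∈ Finset.Icc 1 j, (Nat.choose j m : ℝ) * (-1 : ℝ) ^ (j - m) / (m : ℝ) ^ 3)
        = (-1 : ℝ) ^ (j - 1) * T 3 j := by
      unfold T
      rw [Finset.mul_sum]
      refine Finset.sum_congr rfl fun m hm => ?_
      obtain ⟨hm1, hm2⟩ := Finset.mem_Icc.mp hm
      have hsign : (-1 : ℝ) ^ (j - m) = (-1 : ℝ) ^ (j - 1) * (-1 : ℝ) ^ (m - 1) := by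
        rw [← pow_add]
        have : (j - 1) + (m - 1) = (j - m) + 2 * (m - 1) := by omega
        rw [this, pow_add, pow_mul]
        simp
      rw [hsign]
      ring
    rw [hsum, T_three]
    ring
  refine ⟨hmain, ?_⟩
  unfold S
  rw [hmain]
  have hfac : (Nat.factorial j : ℝ) ≠ 0 := by positivity
  field_simp
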